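/- Let $f : \mathbb{R}^{m_1} \times \mathbb{R}^{m_2} \to \mathbb{R}$ be convex and differentiable, such that for each fixed $x_2$ the map $x_1 \mapsto \nabla_{x_1} f(x_1, x_2)$ is Lipschitz with constant $L_1$, and for each fixed $x_1$ the map $x_2 \mapsto \nabla_{x_2} f(x_1, x_2)$ is Lipschitz with constant $L_2$. Then for all $(x_1,x_2)$ and $(z_1,z_2)$: $f(z_1, z_2) \leq f(x_1, x_2) + \langle \nabla_{x_1} f(x_1,x_2), z_1 - x_1 \rangle + \langle \nabla_{x_2} f(x_1,x_2), z_2 - x_2 \rangle + L_1 \|z_1 - x_1\|^2 + L_2 \|z_2 - x_2\|^2$. -/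

import Mathlib

open scoped RealInnerProductSpace

lemma descent_lemma {E : Type*} [NormedAddCommGroup E] [InnerProductSpace ℝ E] [CompleteSpace E]
    (f : E → ℝ) (g : E → E) (hg : ∀ x, HasGradientAt f (g x) x)
    (L : ℝ) (hL : ∀ a b, ‖g a - g b‖ ≤ L * ‖a - b‖) (a b : E) :
    f b ≤ f a + ⟪g a, b - a⟫ + L / 2 * ‖b - a‖ ^ 2 := by
  have hgcont : Continuous g := by
    have : LipschitzWith (Real.toNNReal L) g := by
      intro x y
      rw [edist_dist, edist_dist, ← ENNReal.ofReal_coe_nnreal, ← ENNReal.ofReal_mul (by positivity)]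
      apply ENNReal.ofReal_le_ofReal
      calc dist (g x) (g y) = ‖g x - g y‖ := by rw [dist_eq_norm]
        _ ≤ L * ‖x - y‖ := hL x y
        _ ≤ Real.toNNReal L * ‖x - y‖ := by
            gcongr; exact Real.le_coe_toNNReal L
        _ = Real.toNNReal L * dist x y := by rw [dist_eq_norm]
    exact this.continuous
  set c : ℝ → E := fun t => a + t • (b - a) with hc
  have hφ : ∀ t : ℝ, HasDerivAt (fun t => f (c t)) ⟪g (c t), b - a⟫ t := by
    intro t
    have h1 : HasDerivAt c (b - a) t := by
      have h0 := ((hasDerivAt_id t).smul_const (b - a)).const_add a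
      simp only [id, one_smul] at h0
      exact h0
    have h2 : HasFDerivAt f ((InnerProductSpace.toDual ℝ E) (g (c t))) (c t) :=
      (hasGradientAt_iff_hasFDerivAt).1 (hg (c t))
    have h3 := h2.comp_hasDerivAt t h1
    simp at h3
    exact h3
  have hcont : Continuous fun t : ℝ => ⟪g (c t), b - a⟫ := by
    exact (hgcont.comp (by continuity)).inner continuous_const
  have hint : f (c 1) - f (c 0) = ∫ t in (0:ℝ)..1, ⟪g (c t), b - a⟫ := by
    rw [intervalIntegral.integral_eq_sub_of_hasDerivAt (fun t _ => hφ t)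
      (hcont.intervalIntegrable 0 1)]
  have hbound : ∀ t ∈ Set.Icc (0:ℝ) 1,
      ⟪g (c t), b - a⟫ ≤ ⟪g a, b - a⟫ + L * t * ‖b - a‖ ^ 2 := by
    intro t ht
    have h1 : ⟪g (c t) - g a, b - a⟫ ≤ ‖g (c t) - g a‖ * ‖b - a‖ :=
      real_inner_le_norm _ _
    have h2 : ‖g (c t) - g a‖ ≤ L * (t * ‖b - a‖) := by
      have := hL (c t) a
      simpa [hc, norm_smul, abs_of_nonneg ht.1, mul_assoc] using this
    have h3 : ‖g (c t) - g a‖ * ‖b - a‖ ≤ L * (t * ‖b - a‖) * ‖b - a‖ := by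
      gcongr
    have h4 : ⟪g (c t) - g a, b - a⟫ = ⟪g (c t), b - a⟫ - ⟪g a, b - a⟫ :=
      inner_sub_left _ _ _
    nlinarith [norm_nonneg (b - a)]
  have hintle : (∫ t in (0:ℝ)..1, ⟪g (c t), b - a⟫)
      ≤ ∫ t in (0:ℝ)..1, (⟪g a, b - a⟫ + L * t * ‖b - a‖ ^ 2) := by
    apply intervalIntegral.integral_mono_on (by norm_num)
      (hcont.intervalIntegrable 0 1)
      ((by continuity : Continuous fun t : ℝ => ⟪g a, b - a⟫ + L * t * ‖b - a‖ ^ 2).intervalIntegrable 0 1)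
    exact hbound
  have hval : (∫ t in (0:ℝ)..1, (⟪g a, b - a⟫ + L * t * ‖b - a‖ ^ 2))
      = ⟪g a, b - a⟫ + L / 2 * ‖b - a‖ ^ 2 := by
    have heq : (fun t : ℝ => L * t * ‖b - a‖ ^ 2) = fun t : ℝ => (L * ‖b - a‖ ^ 2) * t := by
      ext t; ring
    rw [intervalIntegral.integral_add intervalIntegrable_const
      ((by continuity : Continuous fun t : ℝ => L * t * ‖b - a‖ ^ 2).intervalIntegrable 0 1),
      heq, intervalIntegral.integral_const_mul, integral_id]
    simp
    ring
  have hc0 : c 0 = a := by simp [hc]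
  have hc1 : c 1 = b := by simp [hc]
  rw [hc0, hc1] at hint
  linarith [hint, hintle, hval.le, hval.ge]

/-- block-Lipschitz descent inequality with doubled constants for jointly
convex differentiable functions (Lemma 3 of the paper). -/
theorem block_lipschitz_upper_bound
    (m1 m2 : ℕ)
    (f : EuclideanSpace ℝ (Fin m1) × EuclideanSpace ℝ (Fin m2) → ℝ)
    (hconv : ConvexOn ℝ Set.univ f)
    (g1 : EuclideanSpace ℝ (Fin m1) × EuclideanSpace ℝ (Fin m2) → EuclideanSpace ℝ (Fin m1))
    (g2 : EuclideanSpace ℝ (Fin m1) × EuclideanSpace ℝ (Fin m2) → EuclideanSpace ℝ (Fin m2))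
    (hg1 : ∀ x1 x2, HasGradientAt (fun z1 => f (z1, x2)) (g1 (x1, x2)) x1)
    (hg2 : ∀ x1 x2, HasGradientAt (fun z2 => f (x1, z2)) (g2 (x1, x2)) x2)
    (L1 L2 : ℝ)
    (hL1 : ∀ x2 a b, ‖g1 (a, x2) - g1 (b, x2)‖ ≤ L1 * ‖a - b‖)
    (hL2 : ∀ x1 a b, ‖g2 (x1, a) - g2 (x1, b)‖ ≤ L2 * ‖a - b‖) :
    ∀ x1 x2 z1 z2,
      f (z1, z2) ≤ f (x1, x2) + ⟪g1 (x1, x2), z1 - x1⟫ + ⟪g2 (x1, x2), z2 - x2⟫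
        + L1 * ‖z1 - x1‖^2 + L2 * ‖z2 - x2‖^2 := by
  intro x1 x2 z1 z2
  set y1 := (2 : ℝ) • z1 - x1 with hy1
  set y2 := (2 : ℝ) • z2 - x2 with hy2
  have hd1 : f (y1, x2) ≤ f (x1, x2) + ⟪g1 (x1, x2), y1 - x1⟫ + L1 / 2 * ‖y1 - x1‖ ^ 2 :=
    descent_lemma (fun a => f (a, x2)) (fun a => g1 (a, x2)) (fun a => hg1 a x2)
      L1 (hL1 x2) x1 y1
  have hd2 : f (x1, y2) ≤ f (x1, x2) + ⟪g2 (x1, x2), y2 - x2⟫ + L2 / 2 * ‖y2 - x2‖ ^ 2 :=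
    descent_lemma (fun a => f (x1, a)) (fun a => g2 (x1, a)) (fun a => hg2 x1 a)
      L2 (hL2 x1) x2 y2
  have hmid : ((1:ℝ)/2) • ((y1, x2) : EuclideanSpace ℝ (Fin m1) × EuclideanSpace ℝ (Fin m2))
      + ((1:ℝ)/2) • ((x1, y2) : EuclideanSpace ℝ (Fin m1) × EuclideanSpace ℝ (Fin m2))
      = (z1, z2) := by
    apply Prod.ext <;> simp [hy1, hy2, Prod.smul_mk] <;> module
  have hcv := hconv.2 (Set.mem_univ (y1, x2)) (Set.mem_univ (x1, y2))
    (by norm_num : (0:ℝ) ≤ 1/2) (by norm_num : (0:ℝ) ≤ 1/2) (by norm_num)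
  rw [hmid] at hcv
  simp only [smul_eq_mul] at hcv
  have he1 : y1 - x1 = (2:ℝ) • (z1 - x1) := by rw [hy1]; module
  have he2 : y2 - x2 = (2:ℝ) • (z2 - x2) := by rw [hy2]; module
  have hi1 : ⟪g1 (x1, x2), y1 - x1⟫ = 2 * ⟪g1 (x1, x2), z1 - x1⟫ := by
    rw [he1, real_inner_smul_right]
  have hi2 : ⟪g2 (x1, x2), y2 - x2⟫ = 2 * ⟪g2 (x1, x2), z2 - x2⟫ := by
    rw [he2, real_inner_smul_right]
  have hn1 : ‖y1 - x1‖ ^ 2 = 4 * ‖z1 - x1‖ ^ 2 := by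
    rw [he1, norm_smul]; simp; ring
  have hn2 : ‖y2 - x2‖ ^ 2 = 4 * ‖z2 - x2‖ ^ 2 := by
    rw [he2, norm_smul]; simp; ring
  rw [hi1, hn1] at hd1
  rw [hi2, hn2] at hd2
  linarith
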